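/- Let V be a smooth q-vector field on an open set U ⊆ ℝⁿ having constant coefficients on a neighbourhood of a point x ∈ U. Then there exist an open neighbourhood W of x, an integer k ≥ 0, and smooth closed 1-forms ζ¹,…,ζᵏ on W such that for every y ∈ W the covectors ζ¹_y,…,ζᵏ_y form a basis of the annihilator P_y = {w ∈ (ℝⁿ)* : i_wV_y = 0}; in particular dim P_y is constant on W and the Pfaffian system P is integrable. -/

import Mathlib

/-- Constant coefficients for a `q`-vector field (see context): there are an open
neighbourhood `W ⊆ U` of `x`, a `C^∞` diffeomorphism `u` from `W` onto an open
subset of `ℝⁿ` and a constant `q`-vector `c` with `Λ^q(Du_y)(V_y) = c` on `W`,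
i.e. `c (w₁, …, w_q) = V_y (w₁ ∘ Du_y, …, w_q ∘ Du_y)` for all covectors `wᵢ`. -/
def HasConstantCoefficientsVecAt (n q : ℕ) (U : Set (Fin n → ℝ))
    (V : (Fin n → ℝ) → (((Fin n → ℝ) →L[ℝ] ℝ) [×q]→L[ℝ] ℝ)) (x : Fin n → ℝ) : Prop :=
  ∃ W : Set (Fin n → ℝ), IsOpen W ∧ x ∈ W ∧ W ⊆ U ∧
    ∃ u : (Fin n → ℝ) → (Fin n → ℝ),
      ContDiffOn ℝ (⊤ : ℕ∞) u W ∧ Set.InjOn u W ∧ IsOpen (u '' W) ∧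
      (∀ y ∈ W, Function.Bijective (fderiv ℝ u y)) ∧
      ∃ c : ((Fin n → ℝ) →L[ℝ] ℝ) [×q]→L[ℝ] ℝ,
        ∀ y ∈ W, ∀ w : Fin q → ((Fin n → ℝ) →L[ℝ] ℝ),
          c w = V y (fun i => (w i).comp (fderiv ℝ u y))

/-- The annihilator `P = {w ∈ (ℝⁿ)* : i_w V = 0}` of a (`q+1`)-vector,
as a subspace of the dual space. -/
noncomputable def annihilator (n q : ℕ) (V : ((Fin n → ℝ) →L[ℝ] ℝ) [×(q + 1)]→L[ℝ] ℝ) :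
    Submodule ℝ ((Fin n → ℝ) →L[ℝ] ℝ) where
  carrier := {w | ∀ ws : Fin q → ((Fin n → ℝ) →L[ℝ] ℝ), V (Fin.cons w ws) = 0}
  zero_mem' := fun ws => V.map_coord_zero 0 (by simp)
  add_mem' := by
    intro a b ha hb ws
    have h : Fin.cons (a + b) ws = Function.update
        (Fin.cons a ws : Fin (q + 1) → ((Fin n → ℝ) →L[ℝ] ℝ)) (0 : Fin (q + 1))
        (a + b) := by
      simp [Fin.update_cons_zero]
    have ha' : Fin.cons a ws = Function.update
        (Fin.cons a ws : Fin (q + 1) → ((Fin n → ℝ) →L[ℝ] ℝ)) (0 : Fin (q + 1)) a := by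
      simp [Fin.update_cons_zero]
    have hb' : Fin.cons b ws = Function.update
        (Fin.cons a ws : Fin (q + 1) → ((Fin n → ℝ) →L[ℝ] ℝ)) (0 : Fin (q + 1)) b := by
      simp [Fin.update_cons_zero]
    rw [h, V.map_update_add, ← ha', ← hb', ha ws, hb ws, add_zero]
  smul_mem' := by
    intro c a ha ws
    have h : Fin.cons (c • a) ws = Function.update
        (Fin.cons a ws : Fin (q + 1) → ((Fin n → ℝ) →L[ℝ] ℝ)) (0 : Fin (q + 1))
        (c • a) := by
      simp [Fin.update_cons_zero]
    have ha' : Fin.cons a ws = Function.update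
        (Fin.cons a ws : Fin (q + 1) → ((Fin n → ℝ) →L[ℝ] ℝ)) (0 : Fin (q + 1)) a := by
      simp [Fin.update_cons_zero]
    rw [h, V.map_update_smul, ← ha', ha ws, smul_zero]

section Aux

theorem mem_annihilator' {n q : ℕ} (M : ((Fin n → ℝ) →L[ℝ] ℝ) [×(q + 1)]→L[ℝ] ℝ)
    (w : (Fin n → ℝ) →L[ℝ] ℝ) :
    w ∈ annihilator n q M ↔ ∀ ws : Fin q → ((Fin n → ℝ) →L[ℝ] ℝ), M (Fin.cons w ws) = 0 :=
  Iff.rfl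

theorem cons_comp {n q : ℕ} (w : (Fin n → ℝ) →L[ℝ] ℝ) (ws : Fin q → ((Fin n → ℝ) →L[ℝ] ℝ))
    (B : (Fin n → ℝ) →L[ℝ] (Fin n → ℝ)) :
    (fun i => ((Fin.cons w ws : Fin (q+1) → _) i).comp B)
      = Fin.cons (w.comp B) (fun j => (ws j).comp B) := by
  funext i
  refine Fin.cases ?_ (fun j => ?_) i <;> simp

end Aux

/-- if a smooth (`q+1`)-vector field has constant coefficients near
`x ∈ U`, then there are an open neighbourhood `W` of `x`, `k ≥ 0` and smooth closed
`1`-forms `ζ¹, …, ζᵏ` on `W` whose values at every `y ∈ W` form a basis of the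
annihilator `P_y = {w : i_w V_y = 0}`. -/
theorem constantCoefficientsVec_annihilator_integrable (n q : ℕ)
    (U : Set (Fin n → ℝ)) (hU : IsOpen U)
    (V : (Fin n → ℝ) → (((Fin n → ℝ) →L[ℝ] ℝ) [×(q + 1)]→L[ℝ] ℝ))
    (hV : ContDiffOn ℝ (⊤ : ℕ∞) V U)
    (halt : ∀ y ∈ U, ∀ w : Fin (q + 1) → ((Fin n → ℝ) →L[ℝ] ℝ), ∀ i j, i ≠ j →
      w i = w j → V y w = 0)
    (x : Fin n → ℝ) (hx : x ∈ U)
    (hcc : HasConstantCoefficientsVecAt n (q + 1) U V x) :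
    ∃ W : Set (Fin n → ℝ), IsOpen W ∧ x ∈ W ∧ W ⊆ U ∧
      ∃ k : ℕ, ∃ ζ : Fin k → (Fin n → ℝ) → ((Fin n → ℝ) →L[ℝ] ℝ),
        (∀ i, ContDiffOn ℝ (⊤ : ℕ∞) (ζ i) W) ∧
        (∀ i, ∀ y ∈ W, ∀ v₀ v₁ : Fin n → ℝ,
          fderiv ℝ (ζ i) y v₀ v₁ = fderiv ℝ (ζ i) y v₁ v₀) ∧
        (∀ y ∈ W, LinearIndependent ℝ (fun i => ζ i y) ∧
          Submodule.span ℝ (Set.range fun i => ζ i y) = annihilator n q (V y)) := by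
  obtain ⟨W, hWo, hxW, hWU, u, hu, -, -, hbij, c, hc⟩ := hcc
  classical
  set P : Submodule ℝ ((Fin n → ℝ) →L[ℝ] ℝ) := annihilator n q c with hP
  -- pick a finite linearly independent family spanning `P`, inside the ambient dual space
  obtain ⟨s, hsub, hsp, hli⟩ :=
    exists_linearIndependent ℝ ((P : Set ((Fin n → ℝ) →L[ℝ] ℝ)))
  have hsfin : s.Finite := hli.finite
  haveI := hsfin.fintype
  set k : ℕ := Fintype.card s with hk
  set e : Fin k ≃ s := (Fintype.equivFin s).symm with he0
  set β : Fin k → ((Fin n → ℝ) →L[ℝ] ℝ) := fun i => ((e i : ((Fin n → ℝ) →L[ℝ] ℝ))) with hβ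
  have hβli : LinearIndependent ℝ β := hli.comp ⇑e e.injective
  have hβrange : Set.range β = s := by
    have h : Set.range β = Subtype.val '' Set.range ⇑e := by
      rw [hβ]; exact Set.range_comp Subtype.val ⇑e
    rw [h, Set.range_eq_univ.2 e.surjective, Set.image_univ, Subtype.range_coe]
  have hβspan : Submodule.span ℝ (Set.range β) = P := by
    rw [hβrange, hsp, Submodule.span_eq]
  -- the derivative of `u` is smooth on `W`
  have hfd : ContDiffOn ℝ (⊤ : ℕ∞) (fderiv ℝ u) W :=
    ((contDiffOn_infty_iff_fderiv_of_isOpen hWo).1 hu).2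
  -- the 1-forms
  set ζ : Fin k → (Fin n → ℝ) → ((Fin n → ℝ) →L[ℝ] ℝ) :=
    fun i y => (β i).comp (fderiv ℝ u y) with hζ
  refine ⟨W, hWo, hxW, hWU, k, ζ, ?_, ?_, ?_⟩
  · -- smoothness
    intro i
    have : ζ i = (fun A => (ContinuousLinearMap.compL ℝ (Fin n → ℝ) (Fin n → ℝ) ℝ) (β i) A) ∘
        (fderiv ℝ u) := rfl
    rw [this]
    exact ((ContinuousLinearMap.compL ℝ (Fin n → ℝ) (Fin n → ℝ) ℝ (β i)).contDiff).comp_contDiffOn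
      hfd
  · -- closedness
    intro i y hyW v₀ v₁
    have hy2 : ContDiffAt ℝ (⊤ : ℕ∞) u y := hu.contDiffAt (hWo.mem_nhds hyW)
    have hsymm : IsSymmSndFDerivAt ℝ u y := hy2.isSymmSndFDerivAt (by
      rw [minSmoothness_of_isRCLikeNormedField]
      exact WithTop.coe_le_coe.2 le_top)
    have hdiff : DifferentiableAt ℝ (fderiv ℝ u) y :=
      (hfd.contDiffAt (hWo.mem_nhds hyW)).differentiableAt (by
        simp)
    set L : ((Fin n → ℝ) →L[ℝ] (Fin n → ℝ)) →L[ℝ] ((Fin n → ℝ) →L[ℝ] ℝ) :=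
      ContinuousLinearMap.compL ℝ (Fin n → ℝ) (Fin n → ℝ) ℝ (β i) with hL
    have hfder : fderiv ℝ (ζ i) y = L.comp (fderiv ℝ (fderiv ℝ u) y) := by
      have h1 : HasFDerivAt (fun A : (Fin n → ℝ) →L[ℝ] (Fin n → ℝ) => L A) L
        (fderiv ℝ u y) := L.hasFDerivAt
      have h2 : HasFDerivAt (ζ i) (L.comp (fderiv ℝ (fderiv ℝ u) y)) y :=
        h1.comp y hdiff.hasFDerivAt
      exact h2.fderiv
    rw [hfder]
    simp only [ContinuousLinearMap.coe_comp', Function.comp_apply, hL,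
      ContinuousLinearMap.compL_apply, ContinuousLinearMap.coe_comp']
    exact congrArg _ (hsymm v₀ v₁)
  · -- pointwise basis of the annihilator
    intro y hyW
    set A : (Fin n → ℝ) →L[ℝ] (Fin n → ℝ) := fderiv ℝ u y with hA
    have hAbij : Function.Bijective A := hbij y hyW
    set ee : (Fin n → ℝ) ≃L[ℝ] (Fin n → ℝ) :=
      (LinearEquiv.ofBijective A.toLinearMap hAbij).toContinuousLinearEquiv with hee
    have heA : ∀ v, ee v = A v := fun v => rfl
    have hesA : ∀ (f : (Fin n → ℝ) →L[ℝ] ℝ),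
        (f.comp (ee.symm : (Fin n → ℝ) →L[ℝ] (Fin n → ℝ))).comp A = f := by
      intro f
      ext v
      simp only [ContinuousLinearMap.coe_comp', Function.comp_apply,
        ContinuousLinearEquiv.coe_coe]
      rw [← heA v, ee.symm_apply_apply]
    set T : ((Fin n → ℝ) →L[ℝ] ℝ) →ₗ[ℝ] ((Fin n → ℝ) →L[ℝ] ℝ) :=
      ((ContinuousLinearMap.compL ℝ (Fin n → ℝ) (Fin n → ℝ) ℝ).flip A).toLinearMap with hT
    have hTapp : ∀ f : (Fin n → ℝ) →L[ℝ] ℝ, T f = f.comp A := fun f => rfl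
    have hTinj : Function.Injective T := by
      intro f g hfg
      ext v
      obtain ⟨v', rfl⟩ := hAbij.2 v
      have := congrFun (congrArg (fun h : (Fin n → ℝ) →L[ℝ] ℝ =>
        (h : (Fin n → ℝ) → ℝ)) hfg) v'
      simpa [hTapp] using this
    have hζT : (fun i => ζ i y) = ⇑T ∘ β := rfl
    constructor
    · rw [hζT]
      exact hβli.map' T (LinearMap.ker_eq_bot.2 hTinj)
    · -- span = annihilator
      have h1 : (Set.range fun i => ζ i y) = ⇑T '' Set.range β := by
        rw [hζT, Set.range_comp]
      rw [h1, ← Submodule.map_span, hβspan]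
      -- map T P = annihilator of V y
      ext w
      simp only [Submodule.mem_map]
      constructor
      · rintro ⟨g, hg, rfl⟩
        rw [mem_annihilator']
        intro ws
        have hg' : g ∈ annihilator n q c := hg
        have h0 : c (Fin.cons g (fun j => (ws j).comp
            (ee.symm : (Fin n → ℝ) →L[ℝ] (Fin n → ℝ)))) = 0 := hg' _
        have h1 := hc y hyW (Fin.cons g (fun j => (ws j).comp
            (ee.symm : (Fin n → ℝ) →L[ℝ] (Fin n → ℝ))))
        rw [h0] at h1
        rw [hTapp]
        have h2 : (fun i => (((Fin.cons g (fun j : Fin q => (ws j).comp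
            (ee.symm : (Fin n → ℝ) →L[ℝ] (Fin n → ℝ))) : Fin (q+1) → _) i)).comp
              (fderiv ℝ u y)) = Fin.cons (g.comp A) ws := by
          rw [show fderiv ℝ u y = A from rfl, cons_comp]
          have h3 : (fun j : Fin q => (((ws j).comp
              (ee.symm : (Fin n → ℝ) →L[ℝ] (Fin n → ℝ))).comp A)) = ws :=
            funext fun j => hesA (ws j)
          rw [h3]
        rw [h2] at h1
        exact h1.symm
      · intro hw
        rw [mem_annihilator'] at hw
        refine ⟨w.comp (ee.symm : (Fin n → ℝ) →L[ℝ] (Fin n → ℝ)), ?_, hesA w⟩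
        intro ws
        show c _ = 0
        rw [hc y hyW, show fderiv ℝ u y = A from rfl, cons_comp, hesA w]
        exact hw _
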